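/- Let f : ℂ → ℂ be analytic at z with f'(z) ≠ 0 and f''(z) ≠ 0, set s = S f (the Schwarzian derivative, analytic near z), and assume s(z) ≠ 0. Let f̂ = D f, i.e. f̂(w) = f(w) − 2·f'(w)²/f''(w) near z. If f̂''(z) − f̂'(z)·s'(z)/s(z) ≠ 0, then f̂(z) − 2·f̂'(z)²/(f̂''(z) − f̂'(z)·s'(z)/s(z)) = f(z). -/

import Mathlib

open Filter Topology

/-- The Schwarzian derivative `S f (z) = f'''(z)/f'(z) − (3/2)·(f''(z)/f'(z))²`. -/
noncomputable def schwarzian (f : ℂ → ℂ) (z : ℂ) : ℂ :=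
  deriv (deriv (deriv f)) z / deriv f z - (3 / 2) * (deriv (deriv f) z / deriv f z) ^ 2

private lemma analyticAt_deriv {f : ℂ → ℂ} {z : ℂ} (h : AnalyticAt ℂ f z) :
    AnalyticAt ℂ (deriv f) z := by
  obtain ⟨s, hs, hfs⟩ := h.eventually_analyticAt.exists_mem
  exact (AnalyticOnNhd.deriv (fun y hy => hfs y hy)) z (mem_of_mem_nhds hs)

private lemma algkey (a b c d : ℂ) (ha : a ≠ 0) (hb : b ≠ 0) :
    ((-3*b^5 + 4*a*b^3*c + 2*a^2*b^2*d - 4*a^2*b*c^2) / b^4) * ((2*a*c - 3*b^2) / (2*a^2))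
    - ((2*a^2*c - 3*a*b^2) / b^2) * ((a^2*d - 4*a*b*c + 3*b^3) / a^3)
    = -(b * ((2*a^2*c - 3*a*b^2) / b^2) ^ 2) / a^2 * ((2*a*c - 3*b^2) / (2*a^2)) := by
  field_simp
  ring

private lemma alg (fz a b c d P Q S S' : ℂ) (ha : a ≠ 0) (hb : b ≠ 0)
    (hP : P = a - (4 * a * b ^ 2 - 2 * a ^ 2 * c) / b ^ 2)
    (hQ : Q = b - ((4 * b ^ 3 + 4 * a * b * c - 2 * a ^ 2 * d) * b ^ 2
        - (4 * a * b ^ 2 - 2 * a ^ 2 * c) * (2 * b * c)) / (b ^ 2) ^ 2)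
    (hSv : S = c / a - 3 / 2 * (b / a) ^ 2)
    (hS'v : S' = (d * a - c * b) / a ^ 2 - 3 * (b / a) * ((c * a - b ^ 2) / a ^ 2))
    (hSne : S ≠ 0) (hden : Q - P * S' / S ≠ 0) :
    fz - 2 * a ^ 2 / b - 2 * P ^ 2 / (Q - P * S' / S) = fz := by
  have hPv : P = (2*a^2*c - 3*a*b^2) / b^2 := by rw [hP]; field_simp; ring
  have hQv : Q = (-3*b^5 + 4*a*b^3*c + 2*a^2*b^2*d - 4*a^2*b*c^2) / b^4 := by
    rw [hQ]; field_simp; ring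
  have hSv' : S = (2*a*c - 3*b^2) / (2*a^2) := by rw [hSv]; field_simp
  have hS'v' : S' = (a^2*d - 4*a*b*c + 3*b^3) / a^3 := by rw [hS'v]; field_simp; ring
  have key0 : Q * S - P * S' = -(b * P ^ 2) / a ^ 2 * S := by
    rw [hPv, hQv, hSv', hS'v']
    exact algkey a b c d ha hb
  have key : Q - P * S' / S = -(b * P ^ 2) / a ^ 2 := by
    rw [show Q - P * S' / S = (Q * S - P * S') / S by field_simp, key0,
      mul_div_assoc, div_self hSne, mul_one]
  have hPne : P ≠ 0 := by
    intro h; rw [key, h] at hden; simp at hden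
  rw [key]
  have h2 : 2 * P ^ 2 / (-(b * P ^ 2) / a ^ 2) = -(2 * a ^ 2 / b) := by
    field_simp
  rw [h2]; ring

set_option maxHeartbeats 2000000 in
/-- The duality identity `D_{𝒮_θ f} ∘ D_θ (f) = f` of the paper's Proposition on 𝒟 and 𝒮:
the 𝒟-operator with respect to the dual 1-form (proportional to `S f · dz`) applied to
`f̂ = D f` recovers `f`. -/
theorem D_duality
    (f fhat s : ℂ → ℂ) (z : ℂ)
    (hf : AnalyticAt ℂ f z)
    (hf' : deriv f z ≠ 0) (hf'' : deriv (deriv f) z ≠ 0)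
    (hs : s = fun w => schwarzian f w) (hsz : s z ≠ 0)
    (hfhat : fhat = fun w => f w - 2 * (deriv f w) ^ 2 / deriv (deriv f) w)
    (hden : deriv (deriv fhat) z - deriv fhat z * deriv s z / s z ≠ 0) :
    fhat z - 2 * (deriv fhat z) ^ 2
        / (deriv (deriv fhat) z - deriv fhat z * deriv s z / s z) = f z := by
  have a1 : AnalyticAt ℂ (deriv f) z := analyticAt_deriv hf
  have a2 : AnalyticAt ℂ (deriv (deriv f)) z := analyticAt_deriv a1
  have a3 : AnalyticAt ℂ (deriv (deriv (deriv f))) z := analyticAt_deriv a2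
  have H1 : HasDerivAt f (deriv f z) z := hf.differentiableAt.hasDerivAt
  have H2 : HasDerivAt (deriv f) (deriv (deriv f) z) z := a1.differentiableAt.hasDerivAt
  have H3 : HasDerivAt (deriv (deriv f)) (deriv (deriv (deriv f)) z) z :=
    a2.differentiableAt.hasDerivAt
  have H4 : HasDerivAt (deriv (deriv (deriv f))) (deriv (deriv (deriv (deriv f))) z) z :=
    a3.differentiableAt.hasDerivAt
  -- value of fhat
  have hfz : fhat z = f z - 2 * (deriv f z) ^ 2 / deriv (deriv f) z := by rw [hfhat]
  -- first derivative of fhat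
  have hP : deriv fhat z = deriv f z
      - (4 * deriv f z * deriv (deriv f) z ^ 2 - 2 * deriv f z ^ 2 * deriv (deriv (deriv f)) z)
        / deriv (deriv f) z ^ 2 := by
    have h : HasDerivAt (fun w => f w - 2 * (deriv f w) ^ 2 / deriv (deriv f) w)
        (deriv f z - ((2 * ((2 : ℕ) * deriv f z ^ (2 - 1) * deriv (deriv f) z)) * deriv (deriv f) z
          - 2 * deriv f z ^ 2 * deriv (deriv (deriv f)) z) / deriv (deriv f) z ^ 2) z :=
      H1.sub (((H2.pow 2).const_mul 2).div H3 hf'')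
    rw [hfhat, h.deriv]
    push_cast
    ring_nf
  -- second derivative of fhat
  have hev1 : ∀ᶠ w in 𝓝 z, AnalyticAt ℂ f w := hf.eventually_analyticAt
  have hev2 : ∀ᶠ w in 𝓝 z, deriv (deriv f) w ≠ 0 := a2.continuousAt.eventually_ne hf''
  have hfd : deriv fhat =ᶠ[𝓝 z] fun w => deriv f w
      - (4 * deriv f w * deriv (deriv f) w ^ 2 - 2 * deriv f w ^ 2 * deriv (deriv (deriv f)) w)
        / deriv (deriv f) w ^ 2 := by
    filter_upwards [hev1, hev2] with w hw h2
    have K1 : HasDerivAt f (deriv f w) w := hw.differentiableAt.hasDerivAt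
    have K2 : HasDerivAt (deriv f) (deriv (deriv f) w) w :=
      (analyticAt_deriv hw).differentiableAt.hasDerivAt
    have K3 : HasDerivAt (deriv (deriv f)) (deriv (deriv (deriv f)) w) w :=
      (analyticAt_deriv (analyticAt_deriv hw)).differentiableAt.hasDerivAt
    have h : HasDerivAt (fun u => f u - 2 * (deriv f u) ^ 2 / deriv (deriv f) u)
        (deriv f w - ((2 * ((2 : ℕ) * deriv f w ^ (2 - 1) * deriv (deriv f) w)) * deriv (deriv f) w
          - 2 * deriv f w ^ 2 * deriv (deriv (deriv f)) w) / deriv (deriv f) w ^ 2) w :=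
      K1.sub (((K2.pow 2).const_mul 2).div K3 h2)
    rw [hfhat, h.deriv]
    push_cast
    ring_nf
  have hQ : deriv (deriv fhat) z = deriv (deriv f) z
      - ((4 * deriv (deriv f) z ^ 3 + 4 * deriv f z * deriv (deriv f) z * deriv (deriv (deriv f)) z
            - 2 * deriv f z ^ 2 * deriv (deriv (deriv (deriv f))) z) * deriv (deriv f) z ^ 2
          - (4 * deriv f z * deriv (deriv f) z ^ 2 - 2 * deriv f z ^ 2 * deriv (deriv (deriv f)) z)
            * (2 * deriv (deriv f) z * deriv (deriv (deriv f)) z)) / (deriv (deriv f) z ^ 2) ^ 2 := by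
    rw [Filter.EventuallyEq.deriv_eq hfd]
    have h : HasDerivAt (fun w => deriv f w
        - (4 * deriv f w * deriv (deriv f) w ^ 2 - 2 * deriv f w ^ 2 * deriv (deriv (deriv f)) w)
          / deriv (deriv f) w ^ 2)
        (deriv (deriv f) z
          - (((4 * deriv (deriv f) z) * deriv (deriv f) z ^ 2
                + (4 * deriv f z) * ((2 : ℕ) * deriv (deriv f) z ^ (2 - 1) * deriv (deriv (deriv f)) z)
              - ((2 * ((2 : ℕ) * deriv f z ^ (2 - 1) * deriv (deriv f) z)) * deriv (deriv (deriv f)) z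
                + (2 * deriv f z ^ 2) * deriv (deriv (deriv (deriv f))) z)) * deriv (deriv f) z ^ 2
            - (4 * deriv f z * deriv (deriv f) z ^ 2 - 2 * deriv f z ^ 2 * deriv (deriv (deriv f)) z)
              * ((2 : ℕ) * deriv (deriv f) z ^ (2 - 1) * deriv (deriv (deriv f)) z))
            / (deriv (deriv f) z ^ 2) ^ 2) z :=
      H2.sub ((((H2.const_mul 4).mul (H3.pow 2)).sub (((H2.pow 2).const_mul 2).mul H4)).div
        (H3.pow 2) (pow_ne_zero 2 hf''))
    rw [h.deriv]
    push_cast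
    ring_nf
  -- value and derivative of s
  have hseq : s = fun w => deriv (deriv (deriv f)) w / deriv f w
      - 3 / 2 * (deriv (deriv f) w / deriv f w) ^ 2 := by
    rw [hs]; rfl
  have hSz : s z = deriv (deriv (deriv f)) z / deriv f z
      - 3 / 2 * (deriv (deriv f) z / deriv f z) ^ 2 := by rw [hseq]
  have hS' : deriv s z = (deriv (deriv (deriv (deriv f))) z * deriv f z
        - deriv (deriv (deriv f)) z * deriv (deriv f) z) / deriv f z ^ 2
      - 3 * (deriv (deriv f) z / deriv f z)
        * ((deriv (deriv (deriv f)) z * deriv f z - deriv (deriv f) z ^ 2) / deriv f z ^ 2) := by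
    have h : HasDerivAt (fun w => deriv (deriv (deriv f)) w / deriv f w
        - 3 / 2 * (deriv (deriv f) w / deriv f w) ^ 2)
        ((deriv (deriv (deriv (deriv f))) z * deriv f z
            - deriv (deriv (deriv f)) z * deriv (deriv f) z) / deriv f z ^ 2
          - 3 / 2 * ((2 : ℕ) * (deriv (deriv f) z / deriv f z) ^ (2 - 1)
            * ((deriv (deriv (deriv f)) z * deriv f z
                - deriv (deriv f) z * deriv (deriv f) z) / deriv f z ^ 2))) z :=
      (H4.div H2 hf').sub (((H3.div H2 hf').pow 2).const_mul (3 / 2))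
    rw [hseq, h.deriv]
    push_cast
    ring_nf
  rw [hfz]
  exact alg (f z) (deriv f z) (deriv (deriv f) z) (deriv (deriv (deriv f)) z)
    (deriv (deriv (deriv (deriv f))) z) (deriv fhat z) (deriv (deriv fhat) z) (s z) (deriv s z)
    hf' hf'' hP hQ hSz hS'
    hsz hden
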